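/- (Second-iteration unification formula.) For every coordinate k with γ_k(1) ≠ 0, the unified sign is preserved and the unified magnitude is rescaled by the largest active rescaler: γ_k(2) = γ_k(1) and ε_k(2) = ε_k(1) · max{λ^i(1) : 1 ≤ i ≤ n, M^i_k(1) = 1}, where the maximized set is nonempty. -/
import Mathlib


open Filter

theorem stmt10
    (n d : ℕ) (hn : 1 ≤ n) (hd : 1 ≤ d)
    (Δ : ℕ → Fin n → Fin d → ℝ)
    (γ ε U : ℕ → Fin d → ℝ)
    (M : ℕ → Fin n → Fin d → ℝ)
    (lam : ℕ → Fin n → ℝ)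
    (hγ : ∀ (j : ℕ) k, γ (j+1) k = Real.sign (∑ i, Δ j i k))
    (hε : ∀ (j : ℕ) k, γ (j+1) k ≠ 0 →
      (∃ i, Real.sign (Δ j i k) = γ (j+1) k ∧ |Δ j i k| = ε (j+1) k) ∧
      (∀ i, Real.sign (Δ j i k) = γ (j+1) k → |Δ j i k| ≤ ε (j+1) k))
    (hε0 : ∀ (j : ℕ) k, γ (j+1) k = 0 → ε (j+1) k = 0)
    (hU : ∀ (j : ℕ) k, U (j+1) k = γ (j+1) k * ε (j+1) k)
    (hM : ∀ (j : ℕ) i k, M (j+1) i k = if 0 < Δ j i k * U (j+1) k then 1 else 0)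
    (hden : ∀ (j : ℕ) i, ∑ k, |M (j+1) i k * U (j+1) k| ≠ 0)
    (hlam : ∀ (j : ℕ) i,
      lam (j+1) i = (∑ k, |Δ j i k|) / (∑ k, |M (j+1) i k * U (j+1) k|))
    (hstep : ∀ (j : ℕ) i k, Δ (j+1) i k = lam (j+1) i * (M (j+1) i k * U (j+1) k)) :
    ∀ k : Fin d, γ 1 k ≠ 0 →
      γ 2 k = γ 1 k ∧
      ∃ i : Fin n, M 1 i k = 1 ∧ ε 2 k = ε 1 k * lam 1 i ∧
        ∀ i' : Fin n, M 1 i' k = 1 → lam 1 i' ≤ lam 1 i := by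

  intro k hk
  have hone : ∀ x : ℝ, Real.sign x = 1 ↔ 0 < x := by
    intro x
    constructor
    · intro h
      rcases lt_trichotomy x 0 with h' | h' | h'
      · rw [Real.sign_of_neg h'] at h; norm_num at h
      · rw [h', Real.sign_zero] at h; norm_num at h
      · exact h'
    · exact Real.sign_of_pos
  have hneg : ∀ x : ℝ, Real.sign x = -1 ↔ x < 0 := by
    intro x
    constructor
    · intro h
      rcases lt_trichotomy x 0 with h' | h' | h'
      · exact h'
      · rw [h', Real.sign_zero] at h; norm_num at h
      · rw [Real.sign_of_pos h'] at h; norm_num at h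
    · exact Real.sign_of_neg
  have hγc : γ 1 k = 1 ∨ γ 1 k = -1 := by
    rw [hγ 0 k] at hk ⊢
    rcases lt_trichotomy (∑ i, Δ 0 i k) 0 with h | h | h
    · exact Or.inr (Real.sign_of_neg h)
    · exact absurd (by rw [h, Real.sign_zero]) hk
    · exact Or.inl (Real.sign_of_pos h)
  obtain ⟨⟨i0, hs0, ha0⟩, hub0⟩ := hε 0 k hk
  have hΔ0ne : Δ 0 i0 k ≠ 0 := by
    intro h; rw [h, Real.sign_zero] at hs0; exact hk hs0.symm
  have hε1pos : 0 < ε 1 k := by rw [← ha0]; exact abs_pos.mpr hΔ0ne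
  have hU1 : U 1 k = γ 1 k * ε 1 k := hU 0 k
  have habsU1 : |U 1 k| = ε 1 k := by
    rw [hU1, abs_mul]
    rcases hγc with h | h <;> rw [h] <;> simp [abs_of_pos hε1pos]
  have hU1ne : U 1 k ≠ 0 := by
    intro h
    rw [h, abs_zero] at habsU1
    exact hε1pos.ne habsU1
  have hmask : ∀ i, M 1 i k = 1 ↔ Real.sign (Δ 0 i k) = γ 1 k := by
    intro i
    rw [hM 0 i k, hU1]
    rcases hγc with h | h <;> rw [h]
    · rw [hone]
      have hiff : (0 < Δ 0 i k * (1 * ε 1 k)) ↔ 0 < Δ 0 i k := by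
        rw [one_mul]
        constructor
        · intro hp
          by_contra hc
          push_neg at hc
          nlinarith
        · intro hp; exact mul_pos hp hε1pos
      split_ifs with hcond
      · simp [hiff.mp hcond]
      · simp only [zero_ne_one, false_iff]
        intro hc; exact hcond (hiff.mpr hc)
    · rw [hneg]
      have hiff : (0 < Δ 0 i k * (-1 * ε 1 k)) ↔ Δ 0 i k < 0 := by
        constructor
        · intro hp
          by_contra hc
          push_neg at hc
          nlinarith
        · intro hp; nlinarith
      split_ifs with hcond
      · simp [hiff.mp hcond]
      · simp only [zero_ne_one, false_iff]
        intro hc; exact hcond (hiff.mpr hc)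
  have hMbin : ∀ i, M 1 i k = 1 ∨ M 1 i k = 0 := by
    intro i; rw [hM 0 i k]; split_ifs <;> simp
  have hM10 : M 1 i0 k = 1 := (hmask i0).mpr hs0
  have hlampos : ∀ i, M 1 i k = 1 → 0 < lam 1 i := by
    intro i hMi
    rw [hlam 0 i]
    apply div_pos
    · have hne : Δ 0 i k ≠ 0 := by
        intro h
        have := (hmask i).mp hMi
        rw [h, Real.sign_zero] at this
        exact hk this.symm
      have h1 : |Δ 0 i k| ≤ ∑ k', |Δ 0 i k'| :=
        Finset.single_le_sum (f := fun k' => |Δ 0 i k'|) (fun _ _ => abs_nonneg _)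
          (Finset.mem_univ k)
      have h2 : 0 < |Δ 0 i k| := abs_pos.mpr hne
      linarith
    · exact lt_of_le_of_ne (Finset.sum_nonneg fun _ _ => abs_nonneg _) (Ne.symm (hden 0 i))
  -- Δ 1 i k for masked / unmasked
  have hΔ1 : ∀ i, M 1 i k = 1 → Δ 1 i k = lam 1 i * U 1 k := by
    intro i hMi
    rw [hstep 0 i k, hMi, one_mul]
  have hΔ1z : ∀ i, M 1 i k = 0 → Δ 1 i k = 0 := by
    intro i hMi
    rw [hstep 0 i k, hMi, zero_mul, mul_zero]
  -- sum rewrite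
  have hsum : ∑ i, Δ 1 i k = (∑ i, lam 1 i * M 1 i k) * U 1 k := by
    rw [Finset.sum_mul]
    refine Finset.sum_congr rfl fun i _ => ?_
    rw [hstep 0 i k]; ring
  have hSpos : 0 < ∑ i, lam 1 i * M 1 i k := by
    apply Finset.sum_pos'
    · intro i _
      rcases hMbin i with h | h
      · rw [h, mul_one]; exact (hlampos i h).le
      · rw [h, mul_zero]
    · exact ⟨i0, Finset.mem_univ i0, by rw [hM10, mul_one]; exact hlampos i0 hM10⟩
  have hγ2 : γ 2 k = γ 1 k := by
    rw [show (2 : ℕ) = 1 + 1 from rfl, hγ 1 k, hsum, hU1]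
    rcases hγc with h | h <;> rw [h]
    · rw [one_mul, hone]; exact mul_pos hSpos hε1pos
    · rw [hneg]; nlinarith
  refine ⟨hγ2, ?_⟩
  have hk2 : γ 2 k ≠ 0 := by rw [hγ2]; exact hk
  obtain ⟨⟨i1, hs1, ha1⟩, hub1⟩ := hε 1 k hk2
  have hΔ1ne : Δ 1 i1 k ≠ 0 := by
    intro h; rw [h, Real.sign_zero] at hs1; exact hk2 hs1.symm
  have hM11 : M 1 i1 k = 1 := by
    rcases hMbin i1 with h | h
    · exact h
    · exact absurd (hΔ1z i1 h) hΔ1ne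
  have hsignmask : ∀ i, M 1 i k = 1 → Real.sign (Δ 1 i k) = γ 2 k := by
    intro i hMi
    rw [hΔ1 i hMi, hγ2, hU1]
    rcases hγc with h | h <;> rw [h]
    · rw [one_mul, hone]; exact mul_pos (hlampos i hMi) hε1pos
    · rw [hneg]; nlinarith [hlampos i hMi]
  have habsΔ1 : ∀ i, M 1 i k = 1 → |Δ 1 i k| = ε 1 k * lam 1 i := by
    intro i hMi
    rw [hΔ1 i hMi, abs_mul, abs_of_pos (hlampos i hMi), habsU1, mul_comm]
  refine ⟨i1, hM11, ?_, ?_⟩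
  · rw [← ha1, habsΔ1 i1 hM11]
  · intro i' hMi'
    have h1 : |Δ 1 i' k| ≤ ε 2 k := hub1 i' (hsignmask i' hMi')
    rw [habsΔ1 i' hMi', ← ha1, habsΔ1 i1 hM11] at h1
    exact le_of_mul_le_mul_left (by linarith [h1]) hε1pos
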